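/- Let P be a rooted finite poset, Q a finite poset, and K a field. Let φ₁, …, φ_d be isotone maps from P to Q, let p ∈ P, and let π be a permutation of {1, …, d} such that, if p has a lower neighbor p′, then φ_{π(i)}(p) ≥ φ_i(p′) for all i. Define φ′_i : P → Q by φ′_i(q) = φ_{π(i)}(q) if q ≥ p and φ′_i(q) = φ_i(q) otherwise. Then each φ′_i is isotone, and the special binomial f = ∏_{i=1}^d t_{φ_i} − ∏_{i=1}^d t_{φ′_i} belongs to J_{P,Q}. -/

import Mathlib

open MvPolynomial

/-- The `K`-algebra map sending the variable `t_φ` (indexed by an isotone map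
`φ : P →o Q`) to the monomial `∏_{p ∈ P} x_{p, φ(p)}`. -/
noncomputable def isotonianMap (K P Q : Type) [Field K] [PartialOrder P] [Fintype P]
    [PartialOrder Q] [Fintype Q] :
    MvPolynomial (P →o Q) K →ₐ[K] MvPolynomial (P × Q) K :=
  aeval fun φ : P →o Q => ∏ p : P, X (p, φ p)

/-- The defining ideal `J_{P,Q}` of the isotonian algebra `K[P,Q]`. -/
noncomputable def isotonianIdeal (K P Q : Type) [Field K] [PartialOrder P] [Fintype P]
    [PartialOrder Q] [Fintype Q] :
    Ideal (MvPolynomial (P →o Q) K) :=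
  RingHom.ker (isotonianMap K P Q)

/-- Special binomials: the modified maps `φ'ᵢ` are isotone and
`∏ t_{φᵢ} - ∏ t_{φ'ᵢ}` lies in `J_{P,Q}`. -/
theorem statement2 (K P Q : Type) [Field K] [PartialOrder P] [Fintype P]
    [PartialOrder Q] [Fintype Q]
    (hmin : ∃ p₀ : P, ∀ x : P, p₀ ≤ x)
    (hroot : ∀ a b c : P, a ≤ c → b ≤ c → a ≤ b ∨ b ≤ a)
    (d : ℕ) (φ : Fin d → P →o Q) (p : P) (π : Equiv.Perm (Fin d))
    (hπ : ∀ p' : P, p' ⋖ p → ∀ i, φ i p' ≤ φ (π i) p)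
    (φ' : Fin d → P → Q)
    (hup : ∀ i q, p ≤ q → φ' i q = φ (π i) q)
    (hdown : ∀ i q, ¬ p ≤ q → φ' i q = φ i q) :
    ∃ hm : ∀ i, Monotone (φ' i),
      ((∏ i, X (φ i)) - ∏ i, X (⟨φ' i, hm i⟩ : P →o Q) : MvPolynomial (P →o Q) K) ∈
        isotonianIdeal K P Q := by

  have hm : ∀ i, Monotone (φ' i) := by
    intro i a b hab
    by_cases hpa : p ≤ a
    · rw [hup i a hpa, hup i b (hpa.trans hab)]
      exact (φ (π i)).monotone hab
    · by_cases hpb : p ≤ b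
      · rw [hdown i a hpa, hup i b hpb]
        have hap : a ≤ p := by
          rcases hroot a p b hab hpb with h | h
          · exact h
          · exact absurd h hpa
        have halt : a < p := hap.lt_of_ne (by rintro rfl; exact hpa le_rfl)
        have hfin : {x : P | a ≤ x ∧ x < p}.Finite := Set.toFinite _
        obtain ⟨p', hp'mem, hp'max⟩ : ∃ p' ∈ {x : P | a ≤ x ∧ x < p}, ∀ y ∈ {x : P | a ≤ x ∧ x < p}, id p' ≤ id y → id p' = id y := by
          obtain ⟨p', h1, h2⟩ := hfin.exists_maximalFor id _ ⟨a, le_rfl, halt⟩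
          exact ⟨p', h1, fun y hy hle => le_antisymm hle (h2 hy hle)⟩
        obtain ⟨hap', hp'p⟩ := hp'mem
        have hcov : p' ⋖ p := by
          refine ⟨hp'p, fun y hy hyp => ?_⟩
          exact hy.ne (hp'max y ⟨hap'.trans hy.le, hyp⟩ hy.le)
        calc φ i a ≤ φ i p' := (φ i).monotone hap'
          _ ≤ φ (π i) p := hπ p' hcov i
          _ ≤ φ (π i) b := (φ (π i)).monotone hpb
      · rw [hdown i a hpa, hdown i b hpb]
        exact (φ i).monotone hab
  refine ⟨hm, ?_⟩
  have : isotonianMap K P Q ((∏ i, X (φ i)) - ∏ i, X (⟨φ' i, hm i⟩ : P →o Q)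
      : MvPolynomial (P →o Q) K) = 0 := by
    rw [map_sub, map_prod, map_prod, sub_eq_zero]
    simp only [isotonianMap, aeval_X]
    calc ∏ i, ∏ q : P, (X (q, φ i q) : MvPolynomial (P × Q) K)
        = ∏ q : P, ∏ i, X (q, φ i q) := Finset.prod_comm
      _ = ∏ q : P, ∏ i, X (q, φ' i q) := by
          refine Finset.prod_congr rfl fun q _ => ?_
          by_cases hpq : p ≤ q
          · simp only [hup _ q hpq]
            exact (Equiv.prod_comp π fun j => (X (q, φ j q) : MvPolynomial (P × Q) K)).symm
          · simp only [hdown _ q hpq]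
      _ = ∏ i, ∏ q : P, X (q, φ' i q) := Finset.prod_comm
  exact this
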